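/- Let p be an odd prime and ε a non-square in 𝔽_p. The set C_{ns+} = C_ns ∪ {invertible matrices of the form (a b; −εb −a)} is a subgroup of GL₂(𝔽_p); it equals the normalizer of C_ns in GL₂(𝔽_p), and the index of C_ns in C_{ns+} is 2 (equivalently, C_{ns+} has cardinality 2(p² − 1)). -/

import Mathlib

/-- The non-split Cartan set inside `GL₂(𝔽_p)`: invertible matrices of the
form `(a b; εb a)`. -/
def CnsSet (p : ℕ) [Fact (Nat.Prime p)] (ε : ZMod p) : Set (GL (Fin 2) (ZMod p)) :=
  {M | (M : Matrix (Fin 2) (Fin 2) (ZMod p)) 1 1 = (M : Matrix (Fin 2) (Fin 2) (ZMod p)) 0 0 ∧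
       (M : Matrix (Fin 2) (Fin 2) (ZMod p)) 1 0 = ε * (M : Matrix (Fin 2) (Fin 2) (ZMod p)) 0 1}

/-- Invertible matrices of the form `(a b; -εb -a)`. -/
def CnsOtherSet (p : ℕ) [Fact (Nat.Prime p)] (ε : ZMod p) : Set (GL (Fin 2) (ZMod p)) :=
  {M | (M : Matrix (Fin 2) (Fin 2) (ZMod p)) 1 1 = -(M : Matrix (Fin 2) (Fin 2) (ZMod p)) 0 0 ∧
       (M : Matrix (Fin 2) (Fin 2) (ZMod p)) 1 0 = -ε * (M : Matrix (Fin 2) (Fin 2) (ZMod p)) 0 1}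

namespace CartanAux

variable {p : ℕ} [Fact (Nat.Prime p)] {ε : ZMod p}

lemma det_ne_zero' (M : GL (Fin 2) (ZMod p)) :
    (M : Matrix (Fin 2) (Fin 2) (ZMod p)).det ≠ 0 :=
  IsUnit.ne_zero (Matrix.isUnit_iff_isUnit_det _ |>.mp M.isUnit)

lemma two_ne_zero'' (hp : Odd p) : (2 : ZMod p) ≠ 0 := by
  have : ((2 : ℕ) : ZMod p) ≠ 0 := by
    rw [Ne, ZMod.natCast_eq_zero_iff]
    intro h
    have := (Nat.prime_dvd_prime_iff_eq (Fact.out) Nat.prime_two).mp h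
    rw [this] at hp
    exact (Nat.not_odd_iff_even.mpr even_two) hp
  simpa using this

lemma eps_ne_zero (hε : ¬ ∃ x : ZMod p, x ^ 2 = ε) : ε ≠ 0 := by
  rintro rfl; exact hε ⟨0, by ring⟩

lemma key_det (hε : ¬ ∃ x : ZMod p, x ^ 2 = ε) {a b : ZMod p} (h : ¬(a = 0 ∧ b = 0)) :
    a * a - ε * b * b ≠ 0 := by
  intro h0
  have hab : a * a = ε * (b * b) := by linear_combination h0
  by_cases hb : b = 0
  · subst hb
    simp only [mul_zero] at hab
    exact h ⟨by simpa using mul_self_eq_zero.mp hab, rfl⟩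
  · exact hε ⟨a / b, by field_simp; linear_combination hab⟩

lemma mul_ns_ns {M N : GL (Fin 2) (ZMod p)} (hM : M ∈ CnsSet p ε) (hN : N ∈ CnsSet p ε) :
    M * N ∈ CnsSet p ε := by
  obtain ⟨h1, h2⟩ := hM; obtain ⟨h3, h4⟩ := hN
  constructor <;>
  · simp only [Units.val_mul, Matrix.mul_apply, Fin.sum_univ_two]
    rw [h1, h2, h3, h4]; ring

lemma mul_ns_ot {M N : GL (Fin 2) (ZMod p)} (hM : M ∈ CnsSet p ε) (hN : N ∈ CnsOtherSet p ε) :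
    M * N ∈ CnsOtherSet p ε := by
  obtain ⟨h1, h2⟩ := hM; obtain ⟨h3, h4⟩ := hN
  constructor <;>
  · simp only [Units.val_mul, Matrix.mul_apply, Fin.sum_univ_two]
    rw [h1, h2, h3, h4]; ring

lemma mul_ot_ns {M N : GL (Fin 2) (ZMod p)} (hM : M ∈ CnsOtherSet p ε) (hN : N ∈ CnsSet p ε) :
    M * N ∈ CnsOtherSet p ε := by
  obtain ⟨h1, h2⟩ := hM; obtain ⟨h3, h4⟩ := hN
  constructor <;>
  · simp only [Units.val_mul, Matrix.mul_apply, Fin.sum_univ_two]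
    rw [h1, h2, h3, h4]; ring

lemma mul_ot_ot {M N : GL (Fin 2) (ZMod p)} (hM : M ∈ CnsOtherSet p ε) (hN : N ∈ CnsOtherSet p ε) :
    M * N ∈ CnsSet p ε := by
  obtain ⟨h1, h2⟩ := hM; obtain ⟨h3, h4⟩ := hN
  constructor <;>
  · simp only [Units.val_mul, Matrix.mul_apply, Fin.sum_univ_two]
    rw [h1, h2, h3, h4]; ring

lemma inv_ns {M : GL (Fin 2) (ZMod p)} (hM : M ∈ CnsSet p ε) : M⁻¹ ∈ CnsSet p ε := by
  obtain ⟨h1, h2⟩ := hM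
  constructor <;>
  · simp only [Matrix.coe_units_inv, Matrix.inv_def, Matrix.adjugate_fin_two,
      Matrix.smul_apply, Matrix.cons_val', Matrix.cons_val_zero, Matrix.cons_val_one,
      Matrix.head_cons, Matrix.head_fin_const, Matrix.empty_val', Matrix.cons_val_fin_one,
      Matrix.of_apply, smul_eq_mul]
    simp only [h1, h2]; try ring

lemma inv_ot {M : GL (Fin 2) (ZMod p)} (hM : M ∈ CnsOtherSet p ε) : M⁻¹ ∈ CnsOtherSet p ε := by
  obtain ⟨h1, h2⟩ := hM
  constructor <;>
  · simp only [Matrix.coe_units_inv, Matrix.inv_def, Matrix.adjugate_fin_two,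
      Matrix.smul_apply, Matrix.cons_val', Matrix.cons_val_zero, Matrix.cons_val_one,
      Matrix.head_cons, Matrix.head_fin_const, Matrix.empty_val', Matrix.cons_val_fin_one,
      Matrix.of_apply, smul_eq_mul]
    simp only [h1, h2]; try ring

lemma disj (hp : Odd p) (hε : ¬ ∃ x : ZMod p, x ^ 2 = ε) {M : GL (Fin 2) (ZMod p)}
    (hM : M ∈ CnsSet p ε) (hM' : M ∈ CnsOtherSet p ε) : False := by
  obtain ⟨h1, h2⟩ := hM; obtain ⟨h3, h4⟩ := hM'
  have h2' := two_ne_zero'' (p := p) hp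
  have hε0 := eps_ne_zero hε
  have ha : (M : Matrix (Fin 2) (Fin 2) (ZMod p)) 0 0 = 0 := by
    have e := h1.symm.trans h3
    have : (2 : ZMod p) * (M : Matrix (Fin 2) (Fin 2) (ZMod p)) 0 0 = 0 := by
      linear_combination e
    exact (mul_eq_zero.mp this).resolve_left h2'
  have hb : (M : Matrix (Fin 2) (Fin 2) (ZMod p)) 0 1 = 0 := by
    have e := h2.symm.trans h4
    have : (2 : ZMod p) * (ε * (M : Matrix (Fin 2) (Fin 2) (ZMod p)) 0 1) = 0 := by
      linear_combination e
    rcases mul_eq_zero.mp this with h | h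
    · exact absurd h h2'
    · exact (mul_eq_zero.mp h).resolve_left hε0
  apply det_ne_zero' M
  rw [Matrix.det_fin_two, h1, h2, ha, hb]
  ring

lemma mem_union_inv {g : GL (Fin 2) (ZMod p)} (hg : g ∈ CnsSet p ε ∪ CnsOtherSet p ε) :
    g⁻¹ ∈ CnsSet p ε ∪ CnsOtherSet p ε := by
  rcases hg with h | h
  · exact Or.inl (inv_ns h)
  · exact Or.inr (inv_ot h)

lemma conj_mem {g x : GL (Fin 2) (ZMod p)} (hg : g ∈ CnsSet p ε ∪ CnsOtherSet p ε)
    (hx : x ∈ CnsSet p ε) : g * x * g⁻¹ ∈ CnsSet p ε := by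
  rcases hg with h | h
  · exact mul_ns_ns (mul_ns_ns h hx) (inv_ns h)
  · exact mul_ot_ot (mul_ot_ns h hx) (inv_ot h)

lemma normalizer_sub (hp : Odd p) (hε : ¬ ∃ x : ZMod p, x ^ 2 = ε)
    {g : GL (Fin 2) (ZMod p)}
    (hg : ∀ M ∈ CnsSet p ε, g * M * g⁻¹ ∈ CnsSet p ε) :
    g ∈ CnsSet p ε ∪ CnsOtherSet p ε := by
  have h2' := two_ne_zero'' (p := p) hp
  have hε0 : ε ≠ 0 := eps_ne_zero hε
  set Jm : Matrix (Fin 2) (Fin 2) (ZMod p) := !![0, 1; ε, 0] with hJm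
  have hJdet : Jm.det ≠ 0 := by
    rw [hJm, Matrix.det_fin_two_of]; simpa using hε0
  set J : GL (Fin 2) (ZMod p) := Matrix.GeneralLinearGroup.mkOfDetNeZero Jm hJdet with hJ
  have hJcoe : (J : Matrix (Fin 2) (Fin 2) (ZMod p)) = Jm := rfl
  have hJmem : J ∈ CnsSet p ε := by
    constructor <;> rw [hJcoe, hJm] <;> simp
  obtain ⟨n1, n2⟩ := hg J hJmem
  have hJJ : (J : Matrix (Fin 2) (Fin 2) (ZMod p)) * (J : Matrix (Fin 2) (Fin 2) (ZMod p))
      = ε • (1 : Matrix (Fin 2) (Fin 2) (ZMod p)) := by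
    rw [hJcoe, hJm]
    ext i j
    fin_cases i <;> fin_cases j <;>
      simp [Matrix.mul_apply, Fin.sum_univ_two, Matrix.one_apply]
  have key : ((g * J * g⁻¹ : GL (Fin 2) (ZMod p)) : Matrix (Fin 2) (Fin 2) (ZMod p)) *
      ((g * J * g⁻¹ : GL (Fin 2) (ZMod p)) : Matrix (Fin 2) (Fin 2) (ZMod p))
      = ε • (1 : Matrix (Fin 2) (Fin 2) (ZMod p)) := by
    calc ((g * J * g⁻¹ : GL (Fin 2) (ZMod p)) : Matrix (Fin 2) (Fin 2) (ZMod p)) *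
        ((g * J * g⁻¹ : GL (Fin 2) (ZMod p)) : Matrix (Fin 2) (Fin 2) (ZMod p))
        = ((g * J * g⁻¹ * (g * J * g⁻¹) : GL (Fin 2) (ZMod p)) : Matrix (Fin 2) (Fin 2) (ZMod p)) :=
          (Units.val_mul _ _).symm
      _ = ((g * (J * J) * g⁻¹ : GL (Fin 2) (ZMod p)) : Matrix (Fin 2) (Fin 2) (ZMod p)) := by
          rw [show g * J * g⁻¹ * (g * J * g⁻¹) = g * (J * J) * g⁻¹ by group]
      _ = ε • (1 : Matrix (Fin 2) (Fin 2) (ZMod p)) := by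
          simp only [Units.val_mul]
          rw [hJJ, Matrix.mul_smul, mul_one, Matrix.smul_mul, ← Units.val_mul, mul_inv_cancel,
            Units.val_one]
  have hAg : ((g * J * g⁻¹ : GL (Fin 2) (ZMod p)) : Matrix (Fin 2) (Fin 2) (ZMod p)) *
      (g : Matrix (Fin 2) (Fin 2) (ZMod p)) = (g : Matrix (Fin 2) (Fin 2) (ZMod p)) * Jm := by
    calc ((g * J * g⁻¹ : GL (Fin 2) (ZMod p)) : Matrix (Fin 2) (Fin 2) (ZMod p)) *
        (g : Matrix (Fin 2) (Fin 2) (ZMod p))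
        = ((g * J * g⁻¹ * g : GL (Fin 2) (ZMod p)) : Matrix (Fin 2) (Fin 2) (ZMod p)) :=
          (Units.val_mul _ _).symm
      _ = ((g * J : GL (Fin 2) (ZMod p)) : Matrix (Fin 2) (Fin 2) (ZMod p)) := by
          rw [show g * J * g⁻¹ * g = g * J by group]
      _ = (g : Matrix (Fin 2) (Fin 2) (ZMod p)) * Jm := by rw [Units.val_mul, hJcoe]
  set a := ((g * J * g⁻¹ : GL (Fin 2) (ZMod p)) : Matrix (Fin 2) (Fin 2) (ZMod p)) 0 0 with ha
  set b := ((g * J * g⁻¹ : GL (Fin 2) (ZMod p)) : Matrix (Fin 2) (Fin 2) (ZMod p)) 0 1 with hb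
  have e00 := congrFun (congrFun key 0) 0
  have e01 := congrFun (congrFun key 0) 1
  have f1 := congrFun (congrFun hAg 0) 1
  have f2 := congrFun (congrFun hAg 1) 1
  simp only [Matrix.mul_apply, Fin.sum_univ_two, Matrix.smul_apply, Matrix.one_apply_eq,
    smul_eq_mul, mul_one, Matrix.one_apply_ne (show (0:Fin 2) ≠ 1 by decide), mul_zero,
    ← ha, ← hb, n1, n2, hJm, Matrix.cons_val', Matrix.cons_val_zero, Matrix.cons_val_one,
    Matrix.head_cons, Matrix.head_fin_const, Matrix.empty_val', Matrix.cons_val_fin_one,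
    Matrix.of_apply, add_zero, zero_add, zero_mul, one_mul] at e00 e01 f1 f2
  have h2ab : (2 : ZMod p) * (a * b) = 0 := by linear_combination e01
  have hab := (mul_eq_zero.mp h2ab).resolve_left h2'
  rcases mul_eq_zero.mp hab with ha0 | hb0
  · have hbsq : ε * (b * b - 1) = 0 := by linear_combination e00 - a * ha0
    have hbb : (b - 1) * (b + 1) = 0 := by
      have := (mul_eq_zero.mp hbsq).resolve_left hε0
      linear_combination this
    rcases mul_eq_zero.mp hbb with h | h
    · have hb1 : b = 1 := by linear_combination h
      left
      constructor
      · linear_combination f1 - ((g : Matrix (Fin 2) (Fin 2) (ZMod p)) 0 1) * ha0 -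
          ((g : Matrix (Fin 2) (Fin 2) (ZMod p)) 1 1) * hb1
      · linear_combination -f2 + ((g : Matrix (Fin 2) (Fin 2) (ZMod p)) 1 1) * ha0 +
          ε * ((g : Matrix (Fin 2) (Fin 2) (ZMod p)) 0 1) * hb1
    · have hb1 : b = -1 := by linear_combination h
      right
      constructor
      · linear_combination -f1 + ((g : Matrix (Fin 2) (Fin 2) (ZMod p)) 0 1) * ha0 +
          ((g : Matrix (Fin 2) (Fin 2) (ZMod p)) 1 1) * hb1
      · linear_combination -f2 + ((g : Matrix (Fin 2) (Fin 2) (ZMod p)) 1 1) * ha0 +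
          ε * ((g : Matrix (Fin 2) (Fin 2) (ZMod p)) 0 1) * hb1
  · exact absurd ⟨a, by linear_combination e00 - ε * b * hb0⟩ hε

noncomputable def mkNs (hε : ¬ ∃ x : ZMod p, x ^ 2 = ε) (a b : ZMod p)
    (h : ¬(a = 0 ∧ b = 0)) : GL (Fin 2) (ZMod p) :=
  Matrix.GeneralLinearGroup.mkOfDetNeZero !![a, b; ε * b, a] (by
    rw [Matrix.det_fin_two_of]
    intro h0
    exact key_det hε h (by linear_combination h0))

lemma mkNs_coe (hε : ¬ ∃ x : ZMod p, x ^ 2 = ε) (a b : ZMod p) (h : ¬(a = 0 ∧ b = 0)) :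
    (mkNs hε a b h : Matrix (Fin 2) (Fin 2) (ZMod p)) = !![a, b; ε * b, a] := rfl

lemma mkNs_mem (hε : ¬ ∃ x : ZMod p, x ^ 2 = ε) (a b : ZMod p) (h : ¬(a = 0 ∧ b = 0)) :
    mkNs hε a b h ∈ CnsSet p ε := by
  constructor <;> rw [mkNs_coe] <;> simp

lemma ns_entries_ne (M : GL (Fin 2) (ZMod p)) (hM : M ∈ CnsSet p ε) :
    ¬((M : Matrix (Fin 2) (Fin 2) (ZMod p)) 0 0 = 0 ∧
      (M : Matrix (Fin 2) (Fin 2) (ZMod p)) 0 1 = 0) := by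
  rintro ⟨h1, h2⟩
  apply det_ne_zero' M
  rw [Matrix.det_fin_two, hM.1, hM.2, h1, h2]
  ring

noncomputable def nsEquiv (hε : ¬ ∃ x : ZMod p, x ^ 2 = ε) :
    (CnsSet p ε) ≃ {v : ZMod p × ZMod p // v ≠ 0} where
  toFun M := ⟨((M.1 : Matrix (Fin 2) (Fin 2) (ZMod p)) 0 0,
               (M.1 : Matrix (Fin 2) (Fin 2) (ZMod p)) 0 1), by
    intro h
    rw [Prod.mk_eq_zero] at h
    exact ns_entries_ne M.1 M.2 h⟩
  invFun v := ⟨mkNs hε v.1.1 v.1.2 (by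
      intro ⟨h1, h2⟩; exact v.2 (Prod.ext h1 h2)),
    mkNs_mem hε _ _ _⟩
  left_inv M := by
    apply Subtype.ext
    apply Units.ext
    rw [mkNs_coe]
    ext i j
    fin_cases i <;> fin_cases j <;> simp [M.2.1, M.2.2]
  right_inv v := by
    apply Subtype.ext
    apply Prod.ext <;> · simp only [mkNs_coe]; simp

lemma card_ns (hε : ¬ ∃ x : ZMod p, x ^ 2 = ε) : Nat.card (CnsSet p ε) = p ^ 2 - 1 := by
  rw [Nat.card_congr (nsEquiv hε)]
  haveI : NeZero p := ⟨(Fact.out : p.Prime).ne_zero⟩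
  rw [Nat.card_eq_fintype_card]
  have h1 : Fintype.card {v : ZMod p × ZMod p // v ≠ 0}
      = Fintype.card (ZMod p × ZMod p) - 1 := by
    rw [Fintype.card_subtype_compl, Fintype.card_subtype_eq (0 : ZMod p × ZMod p)]
  rw [h1, Fintype.card_prod, ZMod.card, sq]

noncomputable def wElt (p : ℕ) [Fact (Nat.Prime p)] : GL (Fin 2) (ZMod p) :=
  Matrix.GeneralLinearGroup.mkOfDetNeZero !![1, 0; 0, -1] (by
    rw [Matrix.det_fin_two_of]; simp)

lemma wElt_mem : wElt p ∈ CnsOtherSet p ε := by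
  have hcoe : ((wElt p : GL (Fin 2) (ZMod p)) : Matrix (Fin 2) (Fin 2) (ZMod p))
      = !![1, 0; 0, -1] := rfl
  constructor <;> rw [hcoe] <;> simp

/-- The non-split Cartan subgroup. -/
def CnsSubgroup (p : ℕ) [Fact (Nat.Prime p)] (ε : ZMod p) : Subgroup (GL (Fin 2) (ZMod p)) where
  carrier := CnsSet p ε
  one_mem' := by
    constructor <;> simp [Units.val_one, Matrix.one_apply]
  mul_mem' := fun hM hN => mul_ns_ns hM hN
  inv_mem' := fun hM => inv_ns hM

/-- The extended non-split Cartan subgroup. -/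
def CnsPlusSubgroup (p : ℕ) [Fact (Nat.Prime p)] (ε : ZMod p) :
    Subgroup (GL (Fin 2) (ZMod p)) where
  carrier := CnsSet p ε ∪ CnsOtherSet p ε
  one_mem' := by
    left; constructor <;> simp [Units.val_one, Matrix.one_apply]
  mul_mem' := by
    rintro x y (hx | hx) (hy | hy)
    · exact Or.inl (mul_ns_ns hx hy)
    · exact Or.inr (mul_ns_ot hx hy)
    · exact Or.inr (mul_ot_ns hx hy)
    · exact Or.inl (mul_ot_ot hx hy)
  inv_mem' := fun hM => mem_union_inv hM

end CartanAux

/-- `C_{ns+} = C_ns ∪ {(a b; -εb -a)}` is a subgroup of `GL₂(𝔽_p)`, equal to the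
normalizer of `C_ns`; the index of `C_ns` in `C_{ns+}` is `2`, equivalently
`C_{ns+}` has cardinality `2(p² - 1)`. -/
theorem nonsplit_cartan_normalizer (p : ℕ) [Fact (Nat.Prime p)] (hp : Odd p)
    (ε : ZMod p) (hε : ¬ ∃ x : ZMod p, x ^ 2 = ε) :
    ∃ H Hplus : Subgroup (GL (Fin 2) (ZMod p)),
      (H : Set (GL (Fin 2) (ZMod p))) = CnsSet p ε ∧
      (Hplus : Set (GL (Fin 2) (ZMod p))) = CnsSet p ε ∪ CnsOtherSet p ε ∧
      Hplus = Subgroup.normalizer (H : Set (GL (Fin 2) (ZMod p))) ∧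
      H.relIndex Hplus = 2 ∧
      Nat.card Hplus = 2 * (p ^ 2 - 1) := by
  open CartanAux in
  have hidx : ((CnsSubgroup p ε).subgroupOf (CnsPlusSubgroup p ε)).index = 2 := by
    rw [Subgroup.index_eq_two_iff]
    refine ⟨⟨wElt p, Or.inr wElt_mem⟩, fun b => ?_⟩
    rcases b.2 with hb | hb
    · refine Or.inr ⟨hb, fun hA => ?_⟩
      rw [Subgroup.mem_subgroupOf] at hA
      exact disj hp hε hA (mul_ns_ot hb wElt_mem)
    · refine Or.inl ⟨?_, fun hB => ?_⟩
      · rw [Subgroup.mem_subgroupOf]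
        exact mul_ot_ot hb wElt_mem
      · rw [Subgroup.mem_subgroupOf] at hB
        exact disj hp hε hB hb
  have hle : CnsSubgroup p ε ≤ CnsPlusSubgroup p ε := fun x hx => Or.inl hx
  refine ⟨CnsSubgroup p ε, CnsPlusSubgroup p ε, rfl, rfl, ?_, hidx, ?_⟩
  · -- normalizer
    apply le_antisymm
    · intro g hg
      rw [Subgroup.mem_normalizer_iff]
      intro x
      constructor
      · intro hx
        exact conj_mem hg hx
      · intro hx
        have e : g⁻¹ * (g * x * g⁻¹) * (g⁻¹)⁻¹ = x := by group
        exact e ▸ conj_mem (mem_union_inv hg) hx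
    · intro g hg
      exact normalizer_sub hp hε fun M hM => (Subgroup.mem_normalizer_iff.mp hg M).mp hM
  · -- cardinality
    have h1 := Subgroup.index_mul_card ((CnsSubgroup p ε).subgroupOf (CnsPlusSubgroup p ε))
    have h2 : Nat.card ((CnsSubgroup p ε).subgroupOf (CnsPlusSubgroup p ε))
        = Nat.card (CnsSubgroup p ε) :=
      Nat.card_congr (Subgroup.subgroupOfEquivOfLe hle).toEquiv
    have h3 : Nat.card (CnsSubgroup p ε) = p ^ 2 - 1 := by
      rw [show Nat.card (CnsSubgroup p ε) = Nat.card (CnsSet p ε) from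
        Nat.card_congr (Equiv.subtypeEquivRight fun x => Iff.rfl)]
      exact card_ns hε
    rw [← h1, hidx, h2, h3]
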